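/- Let (V,ω) be a real symplectic space of dimension 2n. Given any two Lagrangian subspaces L₀ and L of V, there exists a Lagrangian subspace L₁ of V that is a complement of both, i.e. L₁ ∩ L₀ = {0}, L₁ + L₀ = V, L₁ ∩ L = {0}, and L₁ + L = V. -/

import Mathlib

set_option maxHeartbeats 1600000 in
/-- Given two Lagrangians `L₀` and `L` in a symplectic space `(V,ω)` of dimension `2n`,
there exists a Lagrangian `L₁` complementary to both. -/
theorem exists_common_complementary_lagrangian
    {V : Type*} [AddCommGroup V] [Module ℝ V] [FiniteDimensional ℝ V]
    {n : ℕ} (hV : Module.finrank ℝ V = 2 * n)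
    (ω : V →ₗ[ℝ] V →ₗ[ℝ] ℝ)
    (halt : ∀ x, ω x x = 0)
    (hnd : ∀ x, (∀ y, ω x y = 0) → x = 0)
    (L₀ L : Submodule ℝ V)
    (hL₀dim : Module.finrank ℝ ↥L₀ = n)
    (hL₀ : ∀ x ∈ L₀, ∀ y ∈ L₀, ω x y = 0)
    (hLdim : Module.finrank ℝ ↥L = n)
    (hL : ∀ x ∈ L, ∀ y ∈ L, ω x y = 0) :
    ∃ L₁ : Submodule ℝ V,
      Module.finrank ℝ ↥L₁ = n ∧
      (∀ x ∈ L₁, ∀ y ∈ L₁, ω x y = 0) ∧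
      L₁ ⊓ L₀ = ⊥ ∧ L₁ ⊔ L₀ = ⊤ ∧ L₁ ⊓ L = ⊥ ∧ L₁ ⊔ L = ⊤ := by
  classical
  -- `ω` is skew-symmetric
  have hskew : ∀ x y : V, ω x y = - ω y x := by
    intro x y
    have h := halt (x + y)
    simp only [map_add, LinearMap.add_apply, halt] at h
    linarith
  -- choose a complement `W` of `L₀`
  obtain ⟨W, hW⟩ := Submodule.exists_isCompl L₀
  have hWdim : Module.finrank ℝ ↥W = n := by
    have h := Submodule.finrank_add_eq_of_isCompl hW
    rw [hL₀dim, hV] at h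
    omega
  -- projection onto `W` along `L₀`
  set P : V →ₗ[ℝ] ↥W := W.linearProjOfIsCompl L₀ hW.symm with hPdef
  have hPW : ∀ x : ↥W, P ↑x = x := fun x =>
    Submodule.linearProjOfIsCompl_apply_left hW.symm x
  have hPL₀ : ∀ v ∈ L₀, P v = 0 := fun v hv =>
    Submodule.linearProjOfIsCompl_apply_right' hW.symm hv
  have hkerP : ∀ v : V, P v = 0 → v ∈ L₀ := fun v hv =>
    (Submodule.linearProjOfIsCompl_apply_eq_zero_iff hW.symm).1 hv
  have hsub : ∀ v : V, v - ↑(P v) ∈ L₀ := by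
    intro v
    apply hkerP
    rw [map_sub, hPW, sub_self]
  -- a positive definite symmetric bilinear form on `W`
  set b := Module.finBasis ℝ ↥W with hbdef
  set g : ↥W →ₗ[ℝ] ↥W →ₗ[ℝ] ℝ := ∑ i, (b.coord i).smulRight (b.coord i) with hgdef
  have hg_apply : ∀ x y : ↥W, g x y = ∑ i, b.coord i x * b.coord i y := by
    intro x y
    simp [hgdef, LinearMap.sum_apply, LinearMap.smulRight_apply, smul_eq_mul]
  have hgsymm : ∀ x y : ↥W, g x y = g y x := by
    intro x y
    rw [hg_apply, hg_apply]
    exact Finset.sum_congr rfl fun i _ => mul_comm _ _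
  have hgdefinite : ∀ x : ↥W, g x x = 0 → x = 0 := by
    intro x hx
    rw [hg_apply] at hx
    rw [← b.forall_coord_eq_zero_iff]
    intro i
    have h1 : ∀ j ∈ Finset.univ, (0:ℝ) ≤ b.coord j x * b.coord j x :=
      fun j _ => mul_self_nonneg _
    have h2 := (Finset.sum_eq_zero_iff_of_nonneg h1).1 hx i (Finset.mem_univ i)
    exact mul_self_eq_zero.1 h2
  -- the pairing `L₀ → Dual W` given by `ω`, an isomorphism
  have hdualW : Module.finrank ℝ (↥W →ₗ[ℝ] ℝ) = n := by
    rw [← hWdim]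
    exact Subspace.dual_finrank_eq
  set A : ↥L₀ →ₗ[ℝ] (↥W →ₗ[ℝ] ℝ) := (ω.domRestrict₁₂ W L₀).flip with hAdef
  have hA_apply : ∀ (u : ↥L₀) (z : ↥W), A u z = ω ↑z ↑u := fun _ _ => rfl
  have hAinj : Function.Injective A := by
    rw [← LinearMap.ker_eq_bot, eq_bot_iff]
    intro u hu
    simp only [SetLike.le_def, LinearMap.mem_ker] at hu
    have hu' : ∀ z : ↥W, ω ↑z ↑u = 0 := by
      intro z
      have h := congrArg (fun f => f z) hu
      simpa [hA_apply] using h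
    have hu0 : (u : V) = 0 := by
      apply hnd
      intro y
      have h1 : ω ↑u ↑(P y) = 0 := by rw [hskew]; simp [hu' (P y)]
      have h2 : ω ↑u (y - ↑(P y)) = 0 := hL₀ ↑u u.2 _ (hsub y)
      have h3 : (↑(P y) : V) + (y - ↑(P y)) = y := by abel
      rw [← h3, map_add, h1, h2, add_zero]
    simpa using Subtype.ext hu0
  have hAbij : Function.Bijective A :=
    ⟨hAinj, (LinearMap.injective_iff_surjective_of_finrank_eq_finrank
        (by rw [hL₀dim, hdualW])).1 hAinj⟩
  set eA := LinearEquiv.ofBijective A hAbij with heAdef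
  -- the family of "graph" maps
  set ωW : ↥W →ₗ[ℝ] ↥W →ₗ[ℝ] ℝ := (ω.domRestrict₁₂ W W).flip with hωWdef
  set c : ℝ → (↥W →ₗ[ℝ] ↥W →ₗ[ℝ] ℝ) := fun t => (-(2⁻¹:ℝ)) • ωW + t • g with hcdef
  set τ : ℝ → (↥W →ₗ[ℝ] V) :=
    fun t => L₀.subtype ∘ₗ (eA.symm.toLinearMap ∘ₗ c t) with hτdef
  have hτmem : ∀ t y, τ t y ∈ L₀ := fun t y => (eA.symm ((c t) y)).2
  have hτ : ∀ (t : ℝ) (z y : ↥W), ω ↑z (τ t y) = -(2⁻¹) * ω ↑z ↑y + t * g y z := by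
    intro t z y
    have h1 : A (eA.symm ((c t) y)) = (c t) y := eA.apply_symm_apply ((c t) y)
    have h2 : ω ↑z (τ t y) = A (eA.symm ((c t) y)) z := rfl
    rw [h2, h1]
    simp [hcdef, hωWdef, LinearMap.domRestrict₁₂_apply, smul_eq_mul]
  set F : ℝ → (↥W →ₗ[ℝ] V) := fun t => W.subtype + τ t with hFdef
  have hF_apply : ∀ (t : ℝ) (x : ↥W), F t x = ↑x + τ t x := fun t x => rfl
  have hFinj : ∀ t, Function.Injective (F t) := by
    intro t
    rw [← LinearMap.ker_eq_bot, eq_bot_iff]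
    intro x hx
    simp only [SetLike.le_def, LinearMap.mem_ker] at hx
    rw [hF_apply] at hx
    have hxL₀ : (x:V) ∈ L₀ := by
      have h : (x:V) = -(τ t x) := eq_neg_of_add_eq_zero_left hx
      rw [h]
      exact neg_mem (hτmem t x)
    have hx0 : (x:V) = 0 := Submodule.disjoint_def.1 hW.disjoint _ hxL₀ x.2
    simpa using Subtype.ext hx0
  set Lt : ℝ → Submodule ℝ V := fun t => LinearMap.range (F t) with hLtdef
  have hLt_dim : ∀ t, Module.finrank ℝ ↥(Lt t) = n := by
    intro t
    rw [hLtdef]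
    rw [LinearMap.finrank_range_of_inj (hFinj t), hWdim]
  have hLt_isot : ∀ t, ∀ x ∈ Lt t, ∀ y ∈ Lt t, ω x y = 0 := by
    intro t v hv w hw
    obtain ⟨x, rfl⟩ := hv
    obtain ⟨y, rfl⟩ := hw
    rw [hF_apply, hF_apply]
    have h1 := hτ t x y
    have h2 := hτ t y x
    have h3 : ω (τ t x) (τ t y) = 0 := hL₀ _ (hτmem t x) _ (hτmem t y)
    have h4 : ω (τ t x) ↑y = - ω ↑y (τ t x) := hskew _ _
    have h5 : ω (↑x : V) ↑y = - ω ↑y ↑x := hskew _ _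
    have h6 : g x y = g y x := hgsymm x y
    simp only [map_add, LinearMap.add_apply]
    rw [h1, h3, h4, h2]
    have h7 : t * g x y = t * g y x := by rw [h6]
    linarith
  have hLt_inf_L₀ : ∀ t, Lt t ⊓ L₀ = ⊥ := by
    intro t
    rw [eq_bot_iff]
    rintro v hv
    obtain ⟨hv1, hv2⟩ := Submodule.mem_inf.1 hv
    obtain ⟨x, rfl⟩ := hv1
    have hxL₀ : (x:V) ∈ L₀ := by
      have h : (x:V) = F t x - τ t x := by rw [hF_apply]; abel
      rw [h]
      exact Submodule.sub_mem _ hv2 (hτmem t x)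
    have hx0 : x = 0 :=
      Subtype.ext (Submodule.disjoint_def.1 hW.disjoint _ hxL₀ x.2)
    simp [hx0]
  -- dimension counting for sups
  have hsup : ∀ (A' B' : Submodule ℝ V), Module.finrank ℝ ↥A' = n →
      Module.finrank ℝ ↥B' = n → A' ⊓ B' = ⊥ → A' ⊔ B' = ⊤ := by
    intro A' B' hA' hB' hAB
    apply Submodule.eq_top_of_finrank_eq
    have h := Submodule.finrank_sup_add_finrank_inf_eq A' B'
    rw [hAB, finrank_bot, add_zero, hA', hB'] at h
    rw [h, hV]
    omega
  -- the endomorphism whose eigenvalues are the bad parameters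
  set P' : ↥L →ₗ[ℝ] ↥W := P ∘ₗ L.subtype with hP'def
  set M₁ : Submodule ℝ ↥W := LinearMap.range P' with hM₁def
  obtain ⟨σ, hσ⟩ := P'.rangeRestrict.exists_rightInverse_of_surjective
    (LinearMap.range_rangeRestrict P')
  have hσP : ∀ m : ↥M₁, P' (σ m) = ↑m := by
    intro m
    have h := LinearMap.ext_iff.1 hσ m
    exact congrArg Subtype.val h
  set ι : ↥M₁ →ₗ[ℝ] V := W.subtype ∘ₗ M₁.subtype with hιdef
  set ιL : ↥M₁ →ₗ[ℝ] V := L.subtype ∘ₗ σ with hιLdef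
  have hιLmem : ∀ m : ↥M₁, ιL m ∈ L := fun m => (σ m).2
  set D : ↥M₁ →ₗ[ℝ] (↥M₁ →ₗ[ℝ] ℝ) :=
    ((ω.compl₂ ιL).comp ι).flip - (2⁻¹:ℝ) • ((ω.compl₂ ι).comp ι).flip with hDdef
  have hD_apply : ∀ x y : ↥M₁, D x y = ω (ι y) (ιL x) - 2⁻¹ * ω (ι y) (ι x) := by
    intro x y
    simp only [hDdef, LinearMap.sub_apply, LinearMap.smul_apply, LinearMap.flip_apply,
      LinearMap.comp_apply, LinearMap.compl₂_apply, smul_eq_mul]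
  set G : ↥M₁ →ₗ[ℝ] (↥M₁ →ₗ[ℝ] ℝ) := (g.domRestrict₁₂ M₁ M₁).flip with hGdef
  have hG_apply : ∀ x y : ↥M₁, G x y = g ↑y ↑x := fun _ _ => rfl
  have hGinj : Function.Injective G := by
    rw [← LinearMap.ker_eq_bot, eq_bot_iff]
    intro x hx
    simp only [SetLike.le_def, LinearMap.mem_ker] at hx
    have h0 : g ↑x ↑x = 0 := by
      have h := congrArg (fun f => f x) hx
      simpa [hG_apply] using h
    have h1 : (x : ↥W) = 0 := hgdefinite _ h0
    simpa using Subtype.ext h1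
  have hdualM₁ : Module.finrank ℝ ↥M₁ = Module.finrank ℝ (↥M₁ →ₗ[ℝ] ℝ) := by
    exact Subspace.dual_finrank_eq.symm
  have hGbij : Function.Bijective G :=
    ⟨hGinj, (LinearMap.injective_iff_surjective_of_finrank_eq_finrank hdualM₁).1 hGinj⟩
  set eG := LinearEquiv.ofBijective G hGbij with heGdef
  set E : Module.End ℝ ↥M₁ := eG.symm.toLinearMap ∘ₗ D with hEdef
  have hGE : ∀ x, G (E x) = D x := fun x => eG.apply_symm_apply (D x)
  -- bad parameters are eigenvalues of `E`
  have key : ∀ t : ℝ, Lt t ⊓ L ≠ ⊥ → E.HasEigenvalue t := by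
    intro t hbad
    obtain ⟨v, hv, hv0⟩ := Submodule.exists_mem_ne_zero_of_ne_bot hbad
    obtain ⟨hv1, hvL⟩ := Submodule.mem_inf.1 hv
    obtain ⟨x, hx⟩ := hv1
    have hPv : P v = x := by
      rw [← hx, hF_apply, map_add, hPW, hPL₀ _ (hτmem t x), add_zero]
    have hxM₁ : x ∈ M₁ := by
      refine ⟨⟨v, hvL⟩, ?_⟩
      rw [hP'def]
      simpa using hPv
    set xh : ↥M₁ := ⟨x, hxM₁⟩ with hxhdef
    have hxh0 : xh ≠ 0 := by
      intro h
      apply hv0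
      have hx0 : x = 0 := by simpa [hxhdef] using congrArg Subtype.val h
      rw [← hx, hx0, map_zero]
    have hPιL : ∀ m : ↥M₁, P (ιL m) = ↑m := by
      intro m
      have h := hσP m
      simpa [hP'def, hιLdef] using h
    have hPι : ∀ m : ↥M₁, P (ι m) = ↑m := by
      intro m
      simpa [hιdef] using hPW (M₁.subtype m)
    set w : V := v - ιL xh with hwdef
    have hwL : w ∈ L := Submodule.sub_mem _ hvL (hιLmem xh)
    have hwL₀ : w ∈ L₀ := by
      apply hkerP
      rw [hwdef, map_sub, hPv, hPιL]
      simp [hxhdef]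
    have hωw : ∀ y : ↥M₁, ω (ι y) w = 0 := by
      intro y
      have h1 : ω (ιL y) w = 0 := hL _ (hιLmem y) _ hwL
      have h2 : ιL y - ι y ∈ L₀ := by
        apply hkerP
        rw [map_sub, hPι, hPιL, sub_self]
      have h3 : ω (ιL y - ι y) w = 0 := hL₀ _ h2 _ hwL₀
      simp only [map_sub, LinearMap.sub_apply] at h3
      linarith
    have hDG : D xh = t • G xh := by
      apply LinearMap.ext
      intro y
      have h0 := hωw y
      rw [hwdef, ← hx, hF_apply] at h0
      simp only [map_sub, map_add] at h0
      have h5 : ω (ι y) (τ t x) = -(2⁻¹) * ω (ι y) ↑x + t * g x ↑y := by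
        have h := hτ t (M₁.subtype y) x
        simpa [hιdef] using h
      have h7 : (ι xh : V) = ↑x := by simp [hιdef, hxhdef]
      rw [hD_apply, LinearMap.smul_apply, hG_apply, smul_eq_mul, h7]
      have h9 : (g (↑y : ↥W)) (↑xh : ↥W) = (g x) ↑y := by
        have h8 : (↑xh : ↥W) = x := rfl
        rw [h8]
        exact hgsymm _ _
      rw [h9]
      linarith
    have hE : E xh = t • xh := by
      apply hGinj
      rw [map_smul, hGE, hDG]
    exact Module.End.hasEigenvalue_of_hasEigenvector
      ⟨Module.End.mem_eigenspace_iff.2 hE, hxh0⟩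
  -- choose a parameter which is not an eigenvalue
  obtain ⟨t, ht⟩ : ∃ t : ℝ, ¬ E.HasEigenvalue t := by
    have hfin := E.finite_hasEigenvalue
    obtain ⟨t, ht⟩ := hfin.infinite_compl.nonempty
    exact ⟨t, ht⟩
  have hgoodL : Lt t ⊓ L = ⊥ := by
    by_contra h
    exact ht (key t h)
  exact ⟨Lt t, hLt_dim t, hLt_isot t, hLt_inf_L₀ t,
    hsup _ _ (hLt_dim t) hL₀dim (hLt_inf_L₀ t), hgoodL,
    hsup _ _ (hLt_dim t) hLdim hgoodL⟩
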